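/- Let ρ₁,…,ρₙ be density matrices, p a probability vector, σ_M = Σᵢ pᵢ ρᵢ. Then for every density matrix σ: Σᵢ pᵢ F(ρᵢ, σ) ≤ √(Σᵢ pᵢ F(ρᵢ, σ_M)) (the Average bound). -/

import Mathlib

open Matrix BigOperators Finset ComplexOrder

variable {d n : ℕ}

open Classical in
/-- The positive semidefinite square root (zero if not PSD). -/
noncomputable def psqrt (A : Matrix (Fin d) (Fin d) ℂ) : Matrix (Fin d) (Fin d) ℂ :=
  if h : A.PosSemidef then
    h.1.eigenvectorUnitary.1 * diagonal ((↑) ∘ Real.sqrt ∘ h.1.eigenvalues) *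
      (star h.1.eigenvectorUnitary : Matrix (Fin d) (Fin d) ℂ)
  else 0

/-- Trace norm ‖A‖₁ = Tr √(A*A). -/
noncomputable def traceNorm (A : Matrix (Fin d) (Fin d) ℂ) : ℝ :=
  ((psqrt (Aᴴ * A)).trace).re

/-- Fidelity F(ρ,σ) = Tr √(σ^{1/2} ρ σ^{1/2}). -/
noncomputable def fid (ρ σ : Matrix (Fin d) (Fin d) ℂ) : ℝ :=
  ((psqrt (psqrt σ * ρ * psqrt σ)).trace).re

/-- Density matrix: positive semidefinite with unit trace. -/
def IsDensity (ρ : Matrix (Fin d) (Fin d) ℂ) : Prop := ρ.PosSemidef ∧ ρ.trace = 1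

/-- Contraction: spectral norm at most one, i.e. 1 - UᴴU ⪰ 0. -/
def IsContraction (U : Matrix (Fin d) (Fin d) ℂ) : Prop := (1 - Uᴴ * U).PosSemidef

/-- Probability vector. -/
def IsProbVec (p : Fin n → ℝ) : Prop := (∀ i, 0 ≤ p i) ∧ ∑ i, p i = 1

namespace AvgBound

local notation "M" => Matrix (Fin d) (Fin d) ℂ

open scoped MatrixOrder in
lemma psqrt_eq {A : M} (hA : A.PosSemidef) : psqrt A = CFC.sqrt A := by
  rw [psqrt, dif_pos hA, CFC.sqrt_eq_real_sqrt A hA.nonneg,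
    cfcₙ_eq_cfc (hf := Real.continuous_sqrt.continuousOn) (hf0 := Real.sqrt_zero), hA.1.cfc_eq]
  rfl

open scoped MatrixOrder in
lemma psqrt_posSemidef {A : M} (hA : A.PosSemidef) : (psqrt A).PosSemidef := by
  rw [psqrt_eq hA]; exact (CFC.sqrt_nonneg A).posSemidef

lemma psqrt_herm {A : M} (hA : A.PosSemidef) : (psqrt A)ᴴ = psqrt A :=
  (psqrt_posSemidef hA).1

open scoped MatrixOrder in
lemma psqrt_mul_self {A : M} (hA : A.PosSemidef) : psqrt A * psqrt A = A := by
  rw [psqrt_eq hA]; exact CFC.sqrt_mul_sqrt_self A hA.nonneg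

/-- real part of trace of `Xᴴ * X` is the sum of squared moduli of entries -/
lemma retrace_conjTranspose_mul_self (X : M) :
    ((Xᴴ * X).trace).re = ∑ i, ∑ j, Complex.normSq (X j i) := by
  simp only [Matrix.trace, Matrix.diag, Matrix.mul_apply, Matrix.conjTranspose_apply,
    Complex.re_sum]
  refine Finset.sum_congr rfl fun i _ => Finset.sum_congr rfl fun j _ => ?_
  rw [show star (X j i) = (starRingEnd ℂ) (X j i) from rfl,
    ← Complex.normSq_eq_conj_mul_self, Complex.ofReal_re]

lemma retrace_conjTranspose_mul_self_nonneg (X : M) : 0 ≤ ((Xᴴ * X).trace).re := by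
  rw [retrace_conjTranspose_mul_self]
  exact Finset.sum_nonneg fun i _ => Finset.sum_nonneg fun j _ => Complex.normSq_nonneg _

lemma conjTranspose_mul_self_eq_zero_of_retrace {X : M}
    (h : ((Xᴴ * X).trace).re = 0) : X = 0 := by
  rw [retrace_conjTranspose_mul_self] at h
  have h1 := (Finset.sum_eq_zero_iff_of_nonneg (fun i _ =>
    Finset.sum_nonneg fun j _ => Complex.normSq_nonneg (X j i))).mp h
  ext j i
  have h2 := (Finset.sum_eq_zero_iff_of_nonneg (fun j _ =>
    Complex.normSq_nonneg (X j i))).mp (h1 i (Finset.mem_univ i)) j (Finset.mem_univ j)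
  simpa using Complex.normSq_eq_zero.mp h2

lemma retrace_nonneg {A : M} (hA : A.PosSemidef) : 0 ≤ (A.trace).re := by
  have h := retrace_conjTranspose_mul_self_nonneg (psqrt A)
  rwa [psqrt_herm hA, psqrt_mul_self hA] at h

lemma psd_zero_of_neg_psd {A : M} (hA : A.PosSemidef) (hA' : (-A).PosSemidef) : A = 0 := by
  have h1 := retrace_nonneg hA
  have h2 := retrace_nonneg hA'
  rw [Matrix.trace_neg, Complex.neg_re, neg_nonneg] at h2
  have h3 : (A.trace).re = 0 := le_antisymm h2 h1
  have h4 : psqrt A = 0 := by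
    apply conjTranspose_mul_self_eq_zero_of_retrace
    rwa [psqrt_herm hA, psqrt_mul_self hA]
  rw [← psqrt_mul_self hA, h4, mul_zero]

/-- Cauchy-Schwarz for the Hilbert-Schmidt inner product. -/
lemma cs_trace (X Y : M) :
    ‖(Xᴴ * Y).trace‖ ≤
      Real.sqrt ((Xᴴ * X).trace).re * Real.sqrt ((Yᴴ * Y).trace).re := by
  have habs : ‖(Xᴴ * Y).trace‖ ≤
      ∑ ij : Fin d × Fin d, ‖X ij.2 ij.1‖ * ‖Y ij.2 ij.1‖ := by
    simp only [Matrix.trace, Matrix.diag, Matrix.mul_apply, Matrix.conjTranspose_apply]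
    rw [← Finset.sum_product']
    refine (norm_sum_le _ _).trans ?_
    refine le_of_eq (Finset.sum_congr rfl fun ij _ => ?_)
    rw [show star (X ij.2 ij.1) = (starRingEnd ℂ) (X ij.2 ij.1) from rfl,
      norm_mul, Complex.norm_conj]
  refine habs.trans ?_
  have hcs := Real.sum_mul_le_sqrt_mul_sqrt (Finset.univ : Finset (Fin d × Fin d))
    (fun ij => ‖X ij.2 ij.1‖) (fun ij => ‖Y ij.2 ij.1‖)
  refine hcs.trans (le_of_eq ?_)
  congr 1
  · congr 1
    rw [retrace_conjTranspose_mul_self, ← Finset.sum_product']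
    exact Finset.sum_congr rfl fun ij _ => (Complex.sq_norm _)
  · congr 1
    rw [retrace_conjTranspose_mul_self, ← Finset.sum_product']
    exact Finset.sum_congr rfl fun ij _ => (Complex.sq_norm _)

/-! ### Functional calculus for PSD matrices -/

noncomputable def cfcM {N : M} (hN : N.PosSemidef) (f : ℝ → ℝ) : M :=
  (hN.1.eigenvectorUnitary : M) * diagonal (Complex.ofReal ∘ f ∘ hN.1.eigenvalues) *
    (star (hN.1.eigenvectorUnitary : M))

lemma conj_mul_conj (U A B : M) (h : star U * U = 1) :
    (U * A * star U) * (U * B * star U) = U * (A * B) * star U := by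
  rw [mul_assoc (U * A) (star U) (U * B * star U),
    show star U * (U * B * star U) = B * star U by rw [← mul_assoc, ← mul_assoc, h, one_mul],
    ← mul_assoc, mul_assoc U A B]

lemma star_mul_self_eigenvectorUnitary {N : M} (hN : N.PosSemidef) :
    (star (hN.1.eigenvectorUnitary : M)) * (hN.1.eigenvectorUnitary : M) = 1 :=
  Matrix.mem_unitaryGroup_iff'.mp hN.1.eigenvectorUnitary.2

lemma cfcM_mul {N : M} (hN : N.PosSemidef) (f g : ℝ → ℝ) :
    cfcM hN f * cfcM hN g = cfcM hN (fun x => f x * g x) := by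
  unfold cfcM
  have hd : diagonal (Complex.ofReal ∘ f ∘ hN.1.eigenvalues) *
      diagonal (Complex.ofReal ∘ g ∘ hN.1.eigenvalues) =
      diagonal (Complex.ofReal ∘ (fun x => f x * g x) ∘ hN.1.eigenvalues) := by
    rw [Matrix.diagonal_mul_diagonal]
    refine congrArg Matrix.diagonal (funext fun i => ?_)
    simp
  rw [conj_mul_conj _ _ _ (star_mul_self_eigenvectorUnitary hN), hd]

lemma cfcM_herm {N : M} (hN : N.PosSemidef) (f : ℝ → ℝ) : (cfcM hN f)ᴴ = cfcM hN f := by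
  unfold cfcM
  have hd : (diagonal (Complex.ofReal ∘ f ∘ hN.1.eigenvalues))ᴴ =
      diagonal (Complex.ofReal ∘ f ∘ hN.1.eigenvalues) := by
    rw [Matrix.diagonal_conjTranspose]
    refine congrArg Matrix.diagonal (funext fun i => ?_)
    simp [Pi.star_def, Complex.conj_ofReal]
  rw [Matrix.conjTranspose_mul, Matrix.conjTranspose_mul, hd,
    ← Matrix.star_eq_conjTranspose, ← Matrix.star_eq_conjTranspose, star_star, mul_assoc]

lemma cfcM_posSemidef {N : M} (hN : N.PosSemidef) {f : ℝ → ℝ}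
    (hf : ∀ x, 0 ≤ x → 0 ≤ f x) : (cfcM hN f).PosSemidef := by
  unfold cfcM
  have hd : (diagonal (Complex.ofReal ∘ f ∘ hN.1.eigenvalues)).PosSemidef := by
    refine Matrix.posSemidef_diagonal_iff.mpr fun i => ?_
    rw [Function.comp_apply, Function.comp_apply, Complex.zero_le_real]
    exact hf _ (hN.eigenvalues_nonneg i)
  have h2 := hd.mul_mul_conjTranspose_same (hN.1.eigenvectorUnitary : M)
  rwa [← Matrix.star_eq_conjTranspose] at h2

lemma cfcM_congr {N : M} (hN : N.PosSemidef) {f g : ℝ → ℝ}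
    (h : ∀ x, 0 ≤ x → f x = g x) : cfcM hN f = cfcM hN g := by
  unfold cfcM
  have hd : diagonal (Complex.ofReal ∘ f ∘ hN.1.eigenvalues) =
      diagonal (Complex.ofReal ∘ g ∘ hN.1.eigenvalues) := by
    refine congrArg Matrix.diagonal (funext fun i => ?_)
    simp only [Function.comp_apply]
    rw [h _ (hN.eigenvalues_nonneg i)]
  rw [hd]

lemma cfcM_id {N : M} (hN : N.PosSemidef) : cfcM hN (fun x => x) = N := by
  conv_rhs => rw [hN.1.spectral_theorem]
  rfl

lemma cfcM_sqrt {N : M} (hN : N.PosSemidef) : cfcM hN Real.sqrt = psqrt N := by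
  rw [psqrt, dif_pos hN]
  rfl

/-- pseudo-inverse of the square root -/
noncomputable def pinvS {N : M} (hN : N.PosSemidef) : M :=
  cfcM hN (fun x => if x = 0 then 0 else (Real.sqrt x)⁻¹)

/-- support projection -/
noncomputable def suppP {N : M} (hN : N.PosSemidef) : M :=
  cfcM hN (fun x => if x = 0 then 0 else 1)

lemma pinvS_herm {N : M} (hN : N.PosSemidef) : (pinvS hN)ᴴ = pinvS hN := cfcM_herm hN _

lemma suppP_herm {N : M} (hN : N.PosSemidef) : (suppP hN)ᴴ = suppP hN := cfcM_herm hN _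

lemma suppP_mul_pinvS {N : M} (hN : N.PosSemidef) : suppP hN * pinvS hN = pinvS hN := by
  unfold suppP pinvS
  rw [cfcM_mul]
  refine cfcM_congr hN fun x hx => ?_
  by_cases h0 : x = 0
  · simp [h0]
  · simp [if_neg h0]

lemma pinvS_mul_sqrt {N : M} (hN : N.PosSemidef) : pinvS hN * psqrt N = suppP hN := by
  rw [← cfcM_sqrt hN]
  unfold pinvS suppP
  rw [cfcM_mul]
  refine cfcM_congr hN fun x hx => ?_
  by_cases h0 : x = 0
  · simp [h0]
  · have hs : Real.sqrt x ≠ 0 := ne_of_gt (Real.sqrt_pos.mpr (lt_of_le_of_ne hx (Ne.symm h0)))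
    simp [if_neg h0, inv_mul_cancel₀ hs]

lemma sqrt_mul_pinvS {N : M} (hN : N.PosSemidef) : psqrt N * pinvS hN = suppP hN := by
  rw [← cfcM_sqrt hN]
  unfold pinvS suppP
  rw [cfcM_mul]
  refine cfcM_congr hN fun x hx => ?_
  by_cases h0 : x = 0
  · simp [h0]
  · have hs : Real.sqrt x ≠ 0 := ne_of_gt (Real.sqrt_pos.mpr (lt_of_le_of_ne hx (Ne.symm h0)))
    simp [if_neg h0, mul_inv_cancel₀ hs]

lemma suppP_mul_sqrt {N : M} (hN : N.PosSemidef) : suppP hN * psqrt N = psqrt N := by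
  rw [← cfcM_sqrt hN]
  unfold suppP
  rw [cfcM_mul]
  refine cfcM_congr hN fun x hx => ?_
  by_cases h0 : x = 0
  · simp [h0]
  · simp [if_neg h0]

lemma sqrt_mul_suppP {N : M} (hN : N.PosSemidef) : psqrt N * suppP hN = psqrt N := by
  rw [← cfcM_sqrt hN]
  unfold suppP
  rw [cfcM_mul]
  refine cfcM_congr hN fun x hx => ?_
  by_cases h0 : x = 0
  · simp [h0]
  · simp [if_neg h0]

lemma suppP_idem {N : M} (hN : N.PosSemidef) : suppP hN * suppP hN = suppP hN := by
  unfold suppP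
  rw [cfcM_mul]
  refine cfcM_congr hN fun x hx => ?_
  by_cases h0 : x = 0
  · simp [h0]
  · simp [if_neg h0]

lemma pinvS_mul_N {N : M} (hN : N.PosSemidef) : pinvS hN * N = psqrt N := by
  have h := cfcM_mul hN (fun x => if x = 0 then 0 else (Real.sqrt x)⁻¹) (fun x => x)
  rw [cfcM_id hN] at h
  unfold pinvS
  rw [h, ← cfcM_sqrt hN]
  refine cfcM_congr hN fun x hx => ?_
  by_cases h0 : x = 0
  · simp [h0]
  · have hs : Real.sqrt x ≠ 0 := ne_of_gt (Real.sqrt_pos.mpr (lt_of_le_of_ne hx (Ne.symm h0)))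
    rw [if_neg h0, inv_mul_eq_iff_eq_mul₀ hs]
    exact (Real.mul_self_sqrt hx).symm

lemma pinvS_N_pinvS {N : M} (hN : N.PosSemidef) : pinvS hN * N * pinvS hN = suppP hN := by
  rw [pinvS_mul_N hN, sqrt_mul_pinvS hN]

lemma pinvS_sq_N_pinvS_sq {N : M} (hN : N.PosSemidef) :
    (pinvS hN * pinvS hN) * N * (pinvS hN * pinvS hN) = pinvS hN * pinvS hN := by
  have h1 : pinvS hN * N = psqrt N := pinvS_mul_N hN
  calc (pinvS hN * pinvS hN) * N * (pinvS hN * pinvS hN)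
      = pinvS hN * (pinvS hN * N) * (pinvS hN * pinvS hN) := by rw [mul_assoc (pinvS hN)]
    _ = pinvS hN * psqrt N * (pinvS hN * pinvS hN) := by rw [h1]
    _ = suppP hN * (pinvS hN * pinvS hN) := by rw [pinvS_mul_sqrt hN]
    _ = (suppP hN * pinvS hN) * pinvS hN := by rw [mul_assoc]
    _ = pinvS hN * pinvS hN := by rw [suppP_mul_pinvS hN]

/-- `1 - P` is PSD for a Hermitian idempotent `P`. -/
lemma one_sub_proj_psd {P : M} (hP : Pᴴ = P) (hP2 : P * P = P) : (1 - P).PosSemidef := by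
  have h1 : (1 - P)ᴴ * (1 - P) = 1 - P := by
    have h2 : (1 - P)ᴴ = 1 - P := by
      rw [Matrix.conjTranspose_sub, Matrix.conjTranspose_one, hP]
    have h3 : (1 - P) * (1 - P) = 1 - P - P + P * P := by noncomm_ring
    rw [h2, h3, hP2]
    abel
  have h4 := Matrix.posSemidef_conjTranspose_mul_self (1 - P)
  rwa [h1] at h4

lemma one_sub_suppP_herm {N : M} (hN : N.PosSemidef) : (1 - suppP hN)ᴴ = 1 - suppP hN := by
  rw [Matrix.conjTranspose_sub, Matrix.conjTranspose_one, suppP_herm]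

lemma sqrt_mul_one_sub_suppP {N : M} (hN : N.PosSemidef) :
    psqrt N * (1 - suppP hN) = 0 := by
  rw [mul_sub, mul_one, sqrt_mul_suppP hN, sub_self]

/-- key factorization: `A * (suppP of AᴴA) = A`. -/
lemma mul_suppP_self (A : M) :
    A * suppP (Matrix.posSemidef_conjTranspose_mul_self A) = A := by
  have hN : (Aᴴ * A).PosSemidef := Matrix.posSemidef_conjTranspose_mul_self A
  have hT : A * (1 - suppP hN) = 0 := by
    rw [← Matrix.conjTranspose_mul_self_eq_zero]
    have hK : Aᴴ * (A * (1 - suppP hN)) = psqrt (Aᴴ * A) * (psqrt (Aᴴ * A) * (1 - suppP hN)) := by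
      have := congrArg (fun X => X * (1 - suppP hN)) (psqrt_mul_self hN)
      simp only [mul_assoc] at this
      exact this.symm
    rw [Matrix.conjTranspose_mul, one_sub_suppP_herm hN]
    simp only [mul_assoc]
    rw [hK, sqrt_mul_one_sub_suppP hN, mul_zero, mul_zero]
  rw [mul_sub, mul_one, sub_eq_zero] at hT
  exact hT.symm

lemma factor_eq (A : M) :
    (A * pinvS (Matrix.posSemidef_conjTranspose_mul_self A)) * psqrt (Aᴴ * A) = A := by
  rw [mul_assoc, pinvS_mul_sqrt, mul_suppP_self]

lemma factor_CtC (A : M) :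
    (A * pinvS (Matrix.posSemidef_conjTranspose_mul_self A))ᴴ *
      (A * pinvS (Matrix.posSemidef_conjTranspose_mul_self A)) =
      suppP (Matrix.posSemidef_conjTranspose_mul_self A) := by
  have hN : (Aᴴ * A).PosSemidef := Matrix.posSemidef_conjTranspose_mul_self A
  have h := pinvS_N_pinvS hN
  simp only [mul_assoc] at h ⊢
  rw [Matrix.conjTranspose_mul, pinvS_herm]
  simp only [mul_assoc]
  exact h

/-- Existence of an optimizing partial isometry for the trace norm. -/
lemma exists_isometry (A : M) :
    ∃ V : M, (1 - Vᴴ * V).PosSemidef ∧ (1 - V * Vᴴ).PosSemidef ∧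
      (A * V).trace = (psqrt (Aᴴ * A)).trace := by
  have hN : (Aᴴ * A).PosSemidef := Matrix.posSemidef_conjTranspose_mul_self A
  refine ⟨pinvS hN * Aᴴ, ?_, ?_, ?_⟩
  · have hV : (pinvS hN * Aᴴ)ᴴ * (pinvS hN * Aᴴ) =
        A * (pinvS hN * (pinvS hN * Aᴴ)) := by
      rw [Matrix.conjTranspose_mul, Matrix.conjTranspose_conjTranspose, pinvS_herm]
      simp only [mul_assoc]
    rw [hV]
    refine one_sub_proj_psd ?_ ?_
    · simp only [Matrix.conjTranspose_mul, Matrix.conjTranspose_conjTranspose,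
        pinvS_herm, mul_assoc]
    · have key := congrArg (fun X => X * Aᴴ) (pinvS_sq_N_pinvS_sq hN)
      simp only [mul_assoc] at key ⊢
      rw [key]
  · have hVV : (pinvS hN * Aᴴ) * (pinvS hN * Aᴴ)ᴴ = suppP hN := by
      rw [Matrix.conjTranspose_mul, Matrix.conjTranspose_conjTranspose, pinvS_herm]
      have h := pinvS_N_pinvS hN
      simp only [mul_assoc] at h ⊢
      exact h
    rw [hVV]
    exact one_sub_proj_psd (suppP_herm hN) (suppP_idem hN)
  · rw [Matrix.trace_mul_comm]
    simp only [mul_assoc]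
    have h := pinvS_mul_N hN
    rw [h]

/-- Hölder / duality inequality: `Re Tr(W B) ≤ ‖B‖₁` for a contraction `W`. -/
lemma hoelder {W : M} (hW : (1 - Wᴴ * W).PosSemidef) (B : M) :
    ((W * B).trace).re ≤ traceNorm B := by
  have hN : (Bᴴ * B).PosSemidef := Matrix.posSemidef_conjTranspose_mul_self B
  have hR : (psqrt (Bᴴ * B)).PosSemidef := psqrt_posSemidef hN
  set C := B * pinvS hN with hCdef
  set R := psqrt (Bᴴ * B) with hRdef
  set S := psqrt R with hSdef
  have hS : S.PosSemidef := psqrt_posSemidef hR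
  have hSh : Sᴴ = S := psqrt_herm hR
  have hSS : S * S = R := psqrt_mul_self hR
  have hCR : C * R = B := factor_eq B
  have hCC : Cᴴ * C = suppP hN := factor_CtC B
  have hPR : suppP hN * R = R := suppP_mul_sqrt hN
  have hB : (C * S) * S = B := by rw [mul_assoc, hSS, hCR]
  have htr : (W * B).trace = (S * (W * (C * S))).trace := by
    conv_lhs => rw [← hB, ← mul_assoc]
    rw [Matrix.trace_mul_comm]
  have hCS : ((C * S)ᴴ * (C * S)).trace = R.trace := by
    have h1 : (C * S)ᴴ * (C * S) = S * ((Cᴴ * C) * S) := by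
      rw [Matrix.conjTranspose_mul C S, hSh]
      simp only [mul_assoc]
    rw [h1, hCC, Matrix.trace_mul_comm, mul_assoc, hSS, hPR]
  have hZ : (((W * (C * S))ᴴ * (W * (C * S))).trace).re ≤ (R.trace).re := by
    have hsplit : (C * S)ᴴ * (C * S) - (W * (C * S))ᴴ * (W * (C * S)) =
        (C * S)ᴴ * (1 - Wᴴ * W) * (C * S) := by
      rw [Matrix.conjTranspose_mul W (C * S)]
      noncomm_ring
    have hnn := retrace_nonneg (hW.conjTranspose_mul_mul_same (C * S))
    rw [← hsplit, Matrix.trace_sub, Complex.sub_re, hCS] at hnn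
    linarith
  have habs := cs_trace S (W * (C * S))
  rw [hSh, hSS] at habs
  have htnB : traceNorm B = (R.trace).re := rfl
  rw [htnB]
  calc ((W * B).trace).re = ((S * (W * (C * S))).trace).re := by rw [htr]
    _ ≤ ‖(S * (W * (C * S))).trace‖ := Complex.re_le_norm _
    _ ≤ Real.sqrt ((R.trace).re) *
        Real.sqrt ((((W * (C * S))ᴴ * (W * (C * S))).trace).re) := habs
    _ ≤ Real.sqrt ((R.trace).re) * Real.sqrt ((R.trace).re) :=
        mul_le_mul_of_nonneg_left (Real.sqrt_le_sqrt hZ) (Real.sqrt_nonneg _)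
    _ = (R.trace).re := Real.mul_self_sqrt (retrace_nonneg hR)

/-- trace norm is invariant under conjugate transpose -/
lemma traceNorm_conjTranspose (A : M) : traceNorm Aᴴ = traceNorm A := by
  have hN : (Aᴴ * A).PosSemidef := Matrix.posSemidef_conjTranspose_mul_self A
  have hR : (psqrt (Aᴴ * A)).PosSemidef := psqrt_posSemidef hN
  have hAAT : (A * Aᴴ).PosSemidef := Matrix.posSemidef_self_mul_conjTranspose A
  set C := A * pinvS hN with hCdef
  set R := psqrt (Aᴴ * A) with hRdef
  set S := psqrt R with hSdef
  have hRh : Rᴴ = R := psqrt_herm hN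
  have hSh : Sᴴ = S := psqrt_herm hR
  have hSS : S * S = R := psqrt_mul_self hR
  have hCR : C * R = A := factor_eq A
  have hCC : Cᴴ * C = suppP hN := factor_CtC A
  have hPR : suppP hN * R = R := suppP_mul_sqrt hN
  set G := C * R * Cᴴ with hGdef
  have hGpsd : G.PosSemidef := by
    have h1 : (C * S) * (C * S)ᴴ = G := by
      rw [Matrix.conjTranspose_mul C S, hSh, hGdef, ← hSS]
      simp only [mul_assoc]
    rw [← h1]
    exact Matrix.posSemidef_self_mul_conjTranspose _
  have hG2 : G ^ 2 = A * Aᴴ := by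
    have hCh : (C * R)ᴴ = R * Cᴴ := by rw [Matrix.conjTranspose_mul, hRh]
    have e1 : Cᴴ * (C * (R * Cᴴ)) = suppP hN * (R * Cᴴ) := by rw [← mul_assoc, hCC]
    have e2 : suppP hN * (R * Cᴴ) = R * Cᴴ := by rw [← mul_assoc, hPR]
    calc G ^ 2 = C * (R * (Cᴴ * (C * (R * Cᴴ)))) := by
          rw [pow_two, hGdef]; simp only [mul_assoc]
      _ = C * (R * (R * Cᴴ)) := by rw [e1, e2]
      _ = (C * R) * (R * Cᴴ) := by simp only [mul_assoc]
      _ = (C * R) * (C * R)ᴴ := by rw [hCh]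
      _ = A * Aᴴ := by rw [hCR]
  have hGsqrt : psqrt (A * Aᴴ) = G := by
    open scoped MatrixOrder in
    rw [psqrt_eq hAAT]
    exact (CFC.sqrt_eq_iff _ _ hAAT.nonneg hGpsd.nonneg).mpr (by rw [← sq]; exact hG2)
  have htrG : G.trace = R.trace := by
    rw [hGdef, Matrix.trace_mul_cycle, hCC, hPR]
  rw [traceNorm, traceNorm, Matrix.conjTranspose_conjTranspose, hGsqrt, htrG]

/-- monotonicity of `Tr √·` -/
lemma trace_sqrt_mono {A B : M} (hA : A.PosSemidef) (hB : B.PosSemidef)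
    (hAB : (B - A).PosSemidef) : ((psqrt A).trace).re ≤ ((psqrt B).trace).re := by
  set P := suppP hB with hPdef
  set Q := pinvS hB with hQdef
  have hQh : Qᴴ = Q := pinvS_herm hB
  have h2 : (1 - P)ᴴ = 1 - P := one_sub_suppP_herm hB
  have h1 : psqrt B * (1 - P) = 0 := sqrt_mul_one_sub_suppP hB
  have hQsqrt : Q * psqrt B = P := pinvS_mul_sqrt hB
  have hQBQ : Q * B * Q = P := pinvS_N_pinvS hB
  have hBzero : (1 - P) * B * (1 - P) = 0 := by
    have hK : B * (1 - P) = psqrt B * (psqrt B * (1 - P)) := by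
      have h := congrArg (fun X => X * (1 - P)) (psqrt_mul_self hB)
      simp only [mul_assoc] at h
      exact h.symm
    rw [mul_assoc, hK, h1, mul_zero, mul_zero]
  have hX : (1 - P) * A * (1 - P) = 0 := by
    apply psd_zero_of_neg_psd
    · have h := hA.mul_mul_conjTranspose_same (1 - P)
      rwa [h2] at h
    · have hneg := hAB.mul_mul_conjTranspose_same (1 - P)
      rw [h2] at hneg
      have h : (1 - P) * (B - A) * (1 - P) =
          (1 - P) * B * (1 - P) - (1 - P) * A * (1 - P) := by noncomm_ring
      rw [h, hBzero, zero_sub] at hneg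
      exact hneg
  have hT : psqrt A * (1 - P) = 0 := by
    rw [← Matrix.conjTranspose_mul_self_eq_zero]
    have hK : psqrt A * (psqrt A * (1 - P)) = A * (1 - P) := by
      have h := congrArg (fun X => X * (1 - P)) (psqrt_mul_self hA)
      simp only [mul_assoc] at h
      exact h
    rw [Matrix.conjTranspose_mul, h2, psqrt_herm hA, mul_assoc, hK, ← mul_assoc]
    exact hX
  have hAP : psqrt A * P = psqrt A := by
    rw [mul_sub, mul_one, sub_eq_zero] at hT
    exact hT.symm
  have hCR : (psqrt A * Q) * psqrt B = psqrt A := by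
    rw [mul_assoc, hQsqrt, hAP]
  have hcon : (1 - (psqrt A * Q)ᴴ * (psqrt A * Q)).PosSemidef := by
    have hCC : (psqrt A * Q)ᴴ * (psqrt A * Q) = Q * A * Q := by
      rw [Matrix.conjTranspose_mul, psqrt_herm hA, hQh]
      have hK : psqrt A * (psqrt A * Q) = A * Q := by
        have h := congrArg (fun X => X * Q) (psqrt_mul_self hA)
        simp only [mul_assoc] at h
        exact h
      rw [mul_assoc, hK, ← mul_assoc]
    rw [hCC]
    have hsum : 1 - Q * A * Q = (1 - P) + Q * (B - A) * Q := by
      rw [mul_sub, sub_mul, hQBQ]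
      abel
    rw [hsum]
    have hp1 : (1 - P).PosSemidef := one_sub_proj_psd (suppP_herm hB) (suppP_idem hB)
    have hp2 : (Q * (B - A) * Q).PosSemidef := by
      have h := hAB.mul_mul_conjTranspose_same Q
      rwa [hQh] at h
    exact hp1.add hp2
  have hhoe := hoelder hcon (psqrt B)
  rw [hCR] at hhoe
  have htn : traceNorm (psqrt B) = ((psqrt B).trace).re := by
    rw [traceNorm, psqrt_herm hB, psqrt_mul_self hB]
  rwa [htn] at hhoe

lemma fid_eq_traceNorm {ρ σ : M} (hρ : ρ.PosSemidef) (hσ : σ.PosSemidef) :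
    fid ρ σ = traceNorm (psqrt ρ * psqrt σ) := by
  rw [fid, traceNorm]
  have h : (psqrt ρ * psqrt σ)ᴴ * (psqrt ρ * psqrt σ) = psqrt σ * ρ * psqrt σ := by
    rw [Matrix.conjTranspose_mul, psqrt_herm hρ, psqrt_herm hσ]
    have h1 := congrArg (fun X => psqrt σ * X * psqrt σ) (psqrt_mul_self hρ)
    simp only [mul_assoc] at h1 ⊢
    exact h1
  rw [h]

lemma fid_flip {ρ σ : M} (hρ : ρ.PosSemidef) (hσ : σ.PosSemidef) : fid ρ σ = fid σ ρ := by
  rw [fid_eq_traceNorm hρ hσ, fid_eq_traceNorm hσ hρ, ← traceNorm_conjTranspose,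
    Matrix.conjTranspose_mul, psqrt_herm hρ, psqrt_herm hσ]

lemma psd_smul {A : M} (hA : A.PosSemidef) {c : ℝ} (hc : 0 ≤ c) : ((c : ℂ) • A).PosSemidef := by
  exact hA.smul (Complex.zero_le_real.mpr hc)

lemma main_bound (ρ : Fin n → Matrix (Fin d) (Fin d) ℂ) (p : Fin n → ℝ)
    (hρ : ∀ i, IsDensity (ρ i)) (hp : IsProbVec p)
    (σ : Matrix (Fin d) (Fin d) ℂ) (hσ : IsDensity σ) :
    ∑ i, p i * fid (ρ i) σ ≤
      Real.sqrt (∑ i, p i * fid (ρ i) (∑ j, (p j : ℂ) • ρ j)) := by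
  classical
  obtain ⟨hpnn, hpsum⟩ := hp
  have hρp : ∀ i, (ρ i).PosSemidef := fun i => (hρ i).1
  have hσp : σ.PosSemidef := hσ.1
  have hpsumC : ∑ i, (p i : ℂ) = 1 := by
    rw [← Complex.ofReal_sum, hpsum, Complex.ofReal_one]
  set σM : Matrix (Fin d) (Fin d) ℂ := ∑ j, (p j : ℂ) • ρ j with hσMdef
  have hσM : σM.PosSemidef := by
    rw [hσMdef]
    exact Finset.sum_induction _ _ (fun a b ha hb => ha.add hb) Matrix.PosSemidef.zero
      (fun i _ => psd_smul (hρp i) (hpnn i))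
  choose V hV1 hV2 hV3 using fun i => exists_isometry (psqrt (ρ i) * psqrt σ)
  set B : Fin n → Matrix (Fin d) (Fin d) ℂ := fun i => V i * psqrt (ρ i) with hBdef
  set Y : Matrix (Fin d) (Fin d) ℂ := ∑ i, (p i : ℂ) • B i with hYdef
  -- Step 1
  have hterm : ∀ i, ((psqrt σ * B i).trace).re = fid (ρ i) σ := by
    intro i
    have h0 : psqrt σ * B i = psqrt σ * V i * psqrt (ρ i) := by
      simp only [hBdef]
      rw [mul_assoc]
    rw [h0, Matrix.trace_mul_cycle, hV3 i, fid_eq_traceNorm (hρp i) hσp]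
    rfl
  have step1 : ∑ i, p i * fid (ρ i) σ = ((psqrt σ * Y).trace).re := by
    rw [hYdef, Finset.mul_sum, Matrix.trace_sum, Complex.re_sum]
    refine (Finset.sum_congr rfl fun i _ => ?_).symm
    rw [mul_smul_comm, Matrix.trace_smul, smul_eq_mul, Complex.re_ofReal_mul, hterm i]
  -- Step 2
  have step2 : ((psqrt σ * Y).trace).re ≤ Real.sqrt (((Yᴴ * Y).trace).re) := by
    have h := cs_trace (psqrt σ) Y
    rw [psqrt_herm hσp, psqrt_mul_self hσp, hσ.2, Complex.one_re, Real.sqrt_one, one_mul] at h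
    exact (Complex.re_le_norm _).trans h
  -- Jensen
  have hYconj : Yᴴ = ∑ i, (p i : ℂ) • (B i)ᴴ := by
    rw [hYdef, Matrix.conjTranspose_sum]
    refine Finset.sum_congr rfl fun i _ => ?_
    rw [Matrix.conjTranspose_smul, Complex.star_def, Complex.conj_ofReal]
  have hsum1 : ∑ i, (p i : ℂ) • ((B i)ᴴ * Y) = Yᴴ * Y := by
    calc ∑ i, (p i : ℂ) • ((B i)ᴴ * Y) = ∑ i, ((p i : ℂ) • (B i)ᴴ) * Y :=
          Finset.sum_congr rfl fun i _ => (smul_mul_assoc _ _ _).symm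
      _ = (∑ i, (p i : ℂ) • (B i)ᴴ) * Y := (Finset.sum_mul _ _ _).symm
      _ = Yᴴ * Y := by rw [← hYconj]
  have hsum2 : ∑ i, (p i : ℂ) • (Yᴴ * B i) = Yᴴ * Y := by
    calc ∑ i, (p i : ℂ) • (Yᴴ * B i) = ∑ i, Yᴴ * ((p i : ℂ) • B i) :=
          Finset.sum_congr rfl fun i _ => (mul_smul_comm _ _ _).symm
      _ = Yᴴ * ∑ i, (p i : ℂ) • B i := (Finset.mul_sum _ _ _).symm
      _ = Yᴴ * Y := by rw [← hYdef]
  have hsum3 : ∑ i, (p i : ℂ) • (Yᴴ * Y) = Yᴴ * Y := by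
    rw [← Finset.sum_smul, hpsumC, one_smul]
  have key : σM - Yᴴ * Y = ∑ i, (p i : ℂ) •
      ((B i - Y)ᴴ * (B i - Y) + psqrt (ρ i) * (1 - (V i)ᴴ * V i) * psqrt (ρ i)) := by
    have expand : ∀ i, (B i - Y)ᴴ * (B i - Y) + psqrt (ρ i) * (1 - (V i)ᴴ * V i) * psqrt (ρ i)
        = ρ i - (B i)ᴴ * Y - Yᴴ * B i + Yᴴ * Y := by
      intro i
      have h1 : psqrt (ρ i) * ((V i)ᴴ * V i) * psqrt (ρ i) = (B i)ᴴ * B i := by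
        simp only [hBdef]
        rw [Matrix.conjTranspose_mul, psqrt_herm (hρp i)]
        simp only [mul_assoc]
      have h3 : (B i - Y)ᴴ * (B i - Y) =
          (B i)ᴴ * B i - (B i)ᴴ * Y - Yᴴ * B i + Yᴴ * Y := by
        rw [Matrix.conjTranspose_sub]
        noncomm_ring
      have h4 : psqrt (ρ i) * (1 - (V i)ᴴ * V i) * psqrt (ρ i) = ρ i - (B i)ᴴ * B i := by
        rw [mul_sub, sub_mul, mul_one, psqrt_mul_self (hρp i), h1]
      rw [h3, h4]
      abel
    calc σM - Yᴴ * Y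
        = ∑ i, (p i : ℂ) • (ρ i - (B i)ᴴ * Y - Yᴴ * B i + Yᴴ * Y) := by
          simp only [smul_sub, smul_add, Finset.sum_add_distrib, Finset.sum_sub_distrib,
            hsum1, hsum2, hsum3]
          rw [← hσMdef]
          abel
      _ = _ := by
          refine Finset.sum_congr rfl fun i _ => ?_
          rw [expand i]
  have hJ : (σM - Yᴴ * Y).PosSemidef := by
    rw [key]
    refine Finset.sum_induction _ _ (fun a b ha hb => ha.add hb) Matrix.PosSemidef.zero
      (fun i _ => psd_smul ?_ (hpnn i))
    refine (Matrix.posSemidef_conjTranspose_mul_self _).add ?_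
    have h := (hV1 i).mul_mul_conjTranspose_same (psqrt (ρ i))
    rwa [psqrt_herm (hρp i)] at h
  -- Step 4
  have step4 : ((Yᴴ * Y).trace).re ≤ ∑ i, p i * fid (ρ i) σM := by
    have htr : (Yᴴ * Y).trace = ∑ i, (p i : ℂ) * ((V i) * (psqrt (ρ i) * Yᴴ)).trace := by
      have h5 : Yᴴ * Y = ∑ i, (p i : ℂ) • (Yᴴ * B i) := hsum2.symm
      rw [h5, Matrix.trace_sum]
      refine Finset.sum_congr rfl fun i _ => ?_
      rw [Matrix.trace_smul, smul_eq_mul]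
      congr 1
      have h6 : Yᴴ * B i = (Yᴴ * V i) * psqrt (ρ i) := by
        simp only [hBdef]
        rw [mul_assoc]
      rw [h6, Matrix.trace_mul_cycle, Matrix.trace_mul_comm]
    rw [htr, Complex.re_sum]
    refine Finset.sum_le_sum fun i _ => ?_
    rw [Complex.re_ofReal_mul]
    refine mul_le_mul_of_nonneg_left ?_ (hpnn i)
    refine (hoelder (hV1 i) (psqrt (ρ i) * Yᴴ)).trans ?_
    rw [← traceNorm_conjTranspose, Matrix.conjTranspose_mul,
      Matrix.conjTranspose_conjTranspose, psqrt_herm (hρp i)]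
    have e1 : traceNorm (Y * psqrt (ρ i)) =
        ((psqrt (psqrt (ρ i) * (Yᴴ * Y) * psqrt (ρ i))).trace).re := by
      rw [traceNorm]
      have h7 : (Y * psqrt (ρ i))ᴴ * (Y * psqrt (ρ i)) =
          psqrt (ρ i) * (Yᴴ * Y) * psqrt (ρ i) := by
        rw [Matrix.conjTranspose_mul, psqrt_herm (hρp i)]
        simp only [mul_assoc]
      rw [h7]
    have e2 : fid (ρ i) σM = ((psqrt (psqrt (ρ i) * σM * psqrt (ρ i))).trace).re := by
      rw [fid_flip (hρp i) hσM]
      rfl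
    rw [e1, e2]
    have hps1 : (psqrt (ρ i) * (Yᴴ * Y) * psqrt (ρ i)).PosSemidef := by
      have h := (Matrix.posSemidef_conjTranspose_mul_self Y).mul_mul_conjTranspose_same
        (psqrt (ρ i))
      rwa [psqrt_herm (hρp i)] at h
    have hps2 : (psqrt (ρ i) * σM * psqrt (ρ i)).PosSemidef := by
      have h := hσM.mul_mul_conjTranspose_same (psqrt (ρ i))
      rwa [psqrt_herm (hρp i)] at h
    refine trace_sqrt_mono hps1 hps2 ?_
    have h8 : psqrt (ρ i) * σM * psqrt (ρ i) - psqrt (ρ i) * (Yᴴ * Y) * psqrt (ρ i) =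
        psqrt (ρ i) * (σM - Yᴴ * Y) * psqrt (ρ i) := by noncomm_ring
    rw [h8]
    have h := hJ.mul_mul_conjTranspose_same (psqrt (ρ i))
    rwa [psqrt_herm (hρp i)] at h
  calc ∑ i, p i * fid (ρ i) σ = ((psqrt σ * Y).trace).re := step1
    _ ≤ Real.sqrt (((Yᴴ * Y).trace).re) := step2
    _ ≤ Real.sqrt (∑ i, p i * fid (ρ i) σM) := Real.sqrt_le_sqrt step4

end AvgBound


/-- Average bound: the average fidelity of any density matrix is at most the square root of
the average fidelity of the mean state. -/
theorem average_bound (ρ : Fin n → Matrix (Fin d) (Fin d) ℂ) (p : Fin n → ℝ)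
    (hρ : ∀ i, IsDensity (ρ i)) (hp : IsProbVec p)
    (σ : Matrix (Fin d) (Fin d) ℂ) (hσ : IsDensity σ) :
    ∑ i, p i * fid (ρ i) σ ≤
      Real.sqrt (∑ i, p i * fid (ρ i) (∑ j, (p j : ℂ) • ρ j)) :=
  AvgBound.main_bound ρ p hρ hp σ hσ
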